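/- Let v_1,...,v_N : [−τ̄, ∞) → ℝ^d be C¹ and suppose that for all t ≥ 0 and each i, v̇_i(t) = (λ/N) Σ_{j≠i} a_{ij}(t−τ(t)) (v_j(t−τ(t)) − v_i(t)) with a_{ij} ≥ 0 and (1/N) Σ_{j≠i} a_{ij}(s) < 1 for all s. Then for every t ≥ 0: max_{j} |v̇_j(t)| ≤ λ d_V(t) + λ ∫_{t−τ(t)}^t max_j |v̇_j(s)| ds, where d_V(t) = max_{i,j} |v_j(t) − v_i(t)|. -/

import Mathlib

open scoped BigOperators
open Finset

theorem max_velocity_derivative_bound (N d : ℕ) (hN : 1 ≤ N) (hd : 1 ≤ d)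
    (lam τbar : ℝ) (hlam : 0 < lam) (hτbar : 0 < τbar)
    (v : Fin N → ℝ → EuclideanSpace ℝ (Fin d)) (hv : ∀ i, ContDiff ℝ 1 (v i))
    (τ : ℝ → ℝ) (hτ : ∀ t, 0 ≤ τ t ∧ τ t ≤ τbar)
    (a : Fin N → Fin N → ℝ → ℝ) (ha : ∀ i j s, 0 ≤ a i j s)
    (hnorm : ∀ i s, (1 / (N : ℝ)) * ∑ j ∈ univ.erase i, a i j s < 1)
    (hode : ∀ i t, 0 ≤ t → deriv (v i) t
      = (lam / N) • ∑ j ∈ univ.erase i, a i j (t - τ t) • (v j (t - τ t) - v i t))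
    -- dV s = max_{i,j} |v_j(s) - v_i(s)|, Mx s = max_j |v̇_j(s)|
    (dV Mx : ℝ → ℝ)
    (hdV : ∀ s, IsGreatest {x : ℝ | ∃ i j, x = ‖v j s - v i s‖} (dV s))
    (hMx : ∀ s, IsGreatest {x : ℝ | ∃ j, x = ‖deriv (v j) s‖} (Mx s))
    (t : ℝ) (ht : 0 ≤ t) :
    Mx t ≤ lam * dV t + lam * ∫ s in (t - τ t)..t, Mx s := by
  have i0 : Fin N := ⟨0, hN⟩
  have hne : (univ : Finset (Fin N)).Nonempty := ⟨i0, mem_univ _⟩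
  have hNpos : (0 : ℝ) < N := by exact_mod_cast Nat.pos_of_ne_zero (by omega)
  have hab : t - τ t ≤ t := by linarith [(hτ t).1]
  -- derivatives are continuous
  have hdc : ∀ j, Continuous (deriv (v j)) := fun j => (hv j).continuous_deriv le_rfl
  -- Mx equals a continuous finite sup
  have hMeq : Mx = fun s => univ.sup' hne (fun j => ‖deriv (v j) s‖) := by
    funext s
    apply le_antisymm
    · obtain ⟨j, hj⟩ := (hMx s).1
      rw [hj]; exact Finset.le_sup' (fun j => ‖deriv (v j) s‖) (mem_univ j)
    · exact Finset.sup'_le _ _ fun j _ => (hMx s).2 ⟨j, rfl⟩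
  have hMcont : Continuous Mx := by
    rw [hMeq]
    exact Continuous.finset_sup'_apply hne fun j _ => (hdc j).norm
  have hMint : IntervalIntegrable Mx MeasureTheory.volume (t - τ t) t :=
    hMcont.intervalIntegrable _ _
  have hMnn : ∀ s, 0 ≤ Mx s := fun s => le_trans (norm_nonneg _) ((hMx s).2 ⟨i0, rfl⟩)
  set I := ∫ s in (t - τ t)..t, Mx s with hI
  have hInn : 0 ≤ I :=
    intervalIntegral.integral_nonneg hab fun s _ => hMnn s
  have hdVnn : 0 ≤ dV t := by
    have := (hdV t).2 ⟨i0, i0, rfl⟩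
    simpa using this
  -- displacement bound
  have hdisp : ∀ j : Fin N, ‖v j (t - τ t) - v j t‖ ≤ I := by
    intro j
    have hftc : ∫ s in (t - τ t)..t, deriv (v j) s = v j t - v j (t - τ t) :=
      intervalIntegral.integral_deriv_eq_sub
        (fun x _ => ((hv j).differentiable one_ne_zero).differentiableAt)
        ((hdc j).intervalIntegrable _ _)
    have h1 : ‖v j (t - τ t) - v j t‖ = ‖∫ s in (t - τ t)..t, deriv (v j) s‖ := by
      rw [hftc, norm_sub_rev]
    rw [h1]
    calc ‖∫ s in (t - τ t)..t, deriv (v j) s‖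
        ≤ ∫ s in (t - τ t)..t, ‖deriv (v j) s‖ :=
          intervalIntegral.norm_integral_le_integral_norm hab
      _ ≤ I := intervalIntegral.integral_mono_on hab
          (((hdc j).norm).intervalIntegrable _ _) hMint
          (fun s _ => (hMx s).2 ⟨j, rfl⟩)
  -- bound each derivative at time t
  have hder : ∀ i : Fin N, ‖deriv (v i) t‖ ≤ lam * (dV t + I) := by
    intro i
    rw [hode i t ht]
    have hw : ∀ j : Fin N, ‖v j (t - τ t) - v i t‖ ≤ dV t + I := by
      intro j
      calc ‖v j (t - τ t) - v i t‖
          = ‖(v j t - v i t) + (v j (t - τ t) - v j t)‖ := by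
            congr 1; abel
        _ ≤ ‖v j t - v i t‖ + ‖v j (t - τ t) - v j t‖ := norm_add_le _ _
        _ ≤ dV t + I := add_le_add ((hdV t).2 ⟨i, j, rfl⟩) (hdisp j)
    have hsum : ‖∑ j ∈ univ.erase i, a i j (t - τ t) • (v j (t - τ t) - v i t)‖
        ≤ (∑ j ∈ univ.erase i, a i j (t - τ t)) * (dV t + I) := by
      calc ‖∑ j ∈ univ.erase i, a i j (t - τ t) • (v j (t - τ t) - v i t)‖
          ≤ ∑ j ∈ univ.erase i, ‖a i j (t - τ t) • (v j (t - τ t) - v i t)‖ :=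
            norm_sum_le _ _
        _ ≤ ∑ j ∈ univ.erase i, a i j (t - τ t) * (dV t + I) := by
            apply Finset.sum_le_sum
            intro j _
            rw [norm_smul, Real.norm_eq_abs, abs_of_nonneg (ha i j _)]
            exact mul_le_mul_of_nonneg_left (hw j) (ha i j _)
        _ = (∑ j ∈ univ.erase i, a i j (t - τ t)) * (dV t + I) := by
            rw [Finset.sum_mul]
    rw [norm_smul, Real.norm_eq_abs, abs_of_nonneg (by positivity : (0:ℝ) ≤ lam / N)]
    calc lam / N * ‖∑ j ∈ univ.erase i, a i j (t - τ t) • (v j (t - τ t) - v i t)‖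
        ≤ lam / N * ((∑ j ∈ univ.erase i, a i j (t - τ t)) * (dV t + I)) :=
          mul_le_mul_of_nonneg_left hsum (by positivity)
      _ = lam * ((1 / N * ∑ j ∈ univ.erase i, a i j (t - τ t)) * (dV t + I)) := by
          ring
      _ ≤ lam * (1 * (dV t + I)) := by
          apply mul_le_mul_of_nonneg_left _ hlam.le
          exact mul_le_mul_of_nonneg_right (hnorm i _).le (by linarith)
      _ = lam * (dV t + I) := by ring
  obtain ⟨j0, hj0⟩ := (hMx t).1
  calc Mx t = ‖deriv (v j0) t‖ := hj0
    _ ≤ lam * (dV t + I) := hder j0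
    _ = lam * dV t + lam * I := by ring
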